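/- Let n ≥ 1, p ∈ [1,∞), and let ζ : ℝ → (0,∞) be continuous and strictly decreasing such that ∫₀^∞ ζ(t)^p t^(n−1) dt < ∞. If u_k, u ∈ Conv_c^{(n)}(ℝⁿ) are such that ∫_{ℝⁿ} |ζ(u_k(x)) − ζ(u(x))|^p dx → 0, then u_k(x₀) → +∞ as k → ∞ for every point x₀ in the interior of the complement ℝⁿ \ {u < +∞} of the domain of u. -/

import Mathlib

open MeasureTheory Filter Topology Set
open scoped Classical ENNReal

noncomputable section

abbrev En (n : ℕ) := EuclideanSpace ℝ (Fin n)

/-- `ζ` applied to an extended real value, with the convention `ζ (+∞) = 0`. -/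
def zeval (ζ : ℝ → ℝ) (t : EReal) : ℝ := if t = ⊤ then 0 else ζ t.toReal

/-- The epigraph of an extended-real-valued function. -/
def epiSet {n : ℕ} (u : En n → EReal) : Set (En n × ℝ) := {p | u p.1 ≤ (p.2 : EReal)}

/-- `Conv_c(ℝⁿ)`: proper, lower semicontinuous, convex, coercive functions with
values in `ℝ ∪ {+∞}`. -/
def ConvC (n : ℕ) (u : En n → EReal) : Prop :=
  (∀ x, u x ≠ ⊥) ∧ (∃ x, u x ≠ ⊤) ∧ LowerSemicontinuous u ∧
    Convex ℝ (epiSet u) ∧ Tendsto u (cocompact (En n)) (𝓝 ⊤)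

/-- `Conv_c^{(n)}(ℝⁿ)`: members of `Conv_c(ℝⁿ)` with full-dimensional domain. -/
def ConvCd (n : ℕ) (u : En n → EReal) : Prop :=
  ConvC n u ∧ (interior {x | u x ≠ ⊤}).Nonempty

/-- Epi-convergence of a sequence of extended-real-valued functions. -/
def EpiTendsto {n : ℕ} (u : ℕ → En n → EReal) (v : En n → EReal) : Prop :=
  ∀ x : En n,
    (∀ y : ℕ → En n, Tendsto y atTop (𝓝 x) →
      v x ≤ Filter.liminf (fun k => u k (y k)) atTop) ∧
    (∃ y : ℕ → En n, Tendsto y atTop (𝓝 x) ∧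
      Filter.limsup (fun k => u k (y k)) atTop ≤ v x)

/-- Super-coercivity: `u x / ‖x‖ → +∞` as `‖x‖ → ∞`. -/
def SuperCoercive {n : ℕ} (u : En n → EReal) : Prop :=
  ∀ M : ℝ, ∀ᶠ x in cocompact (En n), ((M * ‖x‖ : ℝ) : EReal) ≤ u x

/-- The functional `δ_{ζ,p}`. -/
def deltaZP {n : ℕ} (ζ : ℝ → ℝ) (p : ℝ) (u v : En n → EReal) : ℝ :=
  (∫ x : En n, |zeval ζ (u x) - zeval ζ (v x)| ^ p) ^ (1 / p)

/-- The functional `δ_{ζ,1} = δ_ζ`. -/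
def delta1 {n : ℕ} (ζ : ℝ → ℝ) (u v : En n → EReal) : ℝ :=
  ∫ x : En n, |zeval ζ (u x) - zeval ζ (v x)|

/-- `f` applied to an extended real value with the convention `f (+∞) = +∞`. -/
def emap (f : ℝ → ℝ) (t : EReal) : EReal := if t = ⊤ then ⊤ else ((f t.toReal : ℝ) : EReal)

/-- The (convex) indicator function `I^∞_K + t`. -/
def indE {n : ℕ} (K : Set (En n)) (t : ℝ) : En n → EReal :=
  fun x => if x ∈ K then (t : EReal) else ⊤

/-- Nondegenerate parallelotope: Minkowski sum of `n` linearly independent segments. -/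
def IsParallelotope {n : ℕ} (P : Set (En n)) : Prop :=
  ∃ (z : En n) (b : Fin n → En n), LinearIndependent ℝ b ∧
    P = (fun c : Fin n → ℝ => z + ∑ i, c i • b i) '' (Set.univ.pi fun _ => Set.Icc (0:ℝ) 1)

/-- Convex body with nonempty interior. -/
def IsConvexBodyI {n : ℕ} (K : Set (En n)) : Prop :=
  IsCompact K ∧ Convex ℝ K ∧ (interior K).Nonempty

/-- Convex body: nonempty compact convex set. -/
def IsCB {n : ℕ} (K : Set (En n)) : Prop := K.Nonempty ∧ IsCompact K ∧ Convex ℝ K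

/-- The extension `d̂_H` of the Hausdorff metric to `K(ℝⁿ) ∪ {∅}`. -/
def dhatH {n : ℕ} (K L : Set (En n)) : ℝ :=
  if K = ∅ then (if L = ∅ then 0 else max 1 (Metric.hausdorffDist L {0}))
  else if L = ∅ then max 1 (Metric.hausdorffDist K {0})
  else Metric.hausdorffDist K L

/-- The functional `δ_ζ^H`. -/
def deltaH {n : ℕ} (ζ : ℝ → ℝ) (u v : En n → EReal) : ℝ :=
  ∫ s in Set.Ioi (0:ℝ), dhatH {x | s ≤ zeval ζ (u x)} {x | s ≤ zeval ζ (v x)}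

/-- The Legendre–Fenchel conjugate. -/
def conjF {n : ℕ} (u : En n → EReal) : En n → EReal :=
  fun y => ⨆ x : En n, (((inner ℝ x y : ℝ) : EReal) - u x)

/-- The admissible set in the definition of the Hausdorff-type metric `δ` of Section 5.2:
`λ > 0` such that `‖u^* - v^*‖_{∞, (1/λ)Bⁿ} ≤ λ`. -/
def DSet {n : ℕ} (u v : En n → EReal) : Set ℝ :=
  {l : ℝ | 0 < l ∧ ∀ x : En n, ‖x‖ ≤ 1 / l →
    conjF u x ≤ conjF v x + (l : EReal) ∧ conjF v x ≤ conjF u x + (l : EReal)}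

/-- The Hausdorff-type metric `δ` of Section 5.2. -/
def deltaStar {n : ℕ} (u v : En n → EReal) : ℝ := sInf (DSet u v)

section Aux
open Metric

lemma EReal_exists_real_le (q : EReal) (h : q ≠ ⊥) : ∃ r : ℝ, (r : EReal) ≤ q := by
  induction q using EReal.rec with
  | bot => exact absurd rfl h
  | coe r => exact ⟨r, le_refl _⟩
  | top => exact ⟨0, le_top⟩

/-- A global real lower bound on a compact set for an lsc `EReal` function avoiding `⊥`. -/
lemma lsc_bddBelow_on_compact {n : ℕ} {w : En n → EReal} (hlsc : LowerSemicontinuous w)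
    (hbot : ∀ x, w x ≠ ⊥) {C : Set (En n)} (hC : IsCompact C) :
    ∃ m : ℝ, ∀ x ∈ C, ((m : ℝ) : EReal) ≤ w x := by
  set Z : ℕ → Set (En n) := fun j => w ⁻¹' Iic ((-(j:ℝ) : ℝ) : EReal) with hZ
  have hZc : ∀ j, IsClosed (Z j) := fun j => hlsc.isClosed_preimage _
  have hempty : C ∩ ⋂ j, Z j = ∅ := by
    rw [eq_empty_iff_forall_notMem]
    rintro x ⟨-, hx⟩
    rw [mem_iInter] at hx
    obtain ⟨r, hr⟩ := EReal_exists_real_le (w x) (hbot x)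
    set j : ℕ := ⌈|r|⌉₊ + 1 with hj
    have h2 : w x ≤ ((-(j:ℝ) : ℝ) : EReal) := hx j
    have h3 : (r : EReal) ≤ ((-(j:ℝ) : ℝ) : EReal) := le_trans hr h2
    rw [EReal.coe_le_coe_iff] at h3
    have h1 : |r| ≤ (⌈|r|⌉₊ : ℝ) := Nat.le_ceil _
    have h2' : -r ≤ |r| := neg_le_abs r
    rw [hj] at h3
    push_cast at h3
    linarith
  obtain ⟨t, ht⟩ := hC.elim_finite_subfamily_closed Z hZc (by rw [hempty])
  refine ⟨-(t.sup id : ℕ), fun x hx => ?_⟩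
  by_contra hcon
  rw [not_le] at hcon
  have hxZ : x ∈ ⋂ i ∈ t, Z i := by
    simp only [mem_iInter]
    intro j hj
    have hj' : (j : ℝ) ≤ ((t.sup id : ℕ) : ℝ) := by
      exact_mod_cast Finset.le_sup (f := id) hj
    refine mem_preimage.mpr (mem_Iic.mpr (le_trans hcon.le ?_))
    exact EReal.coe_le_coe_iff.mpr (by linarith)
  exact absurd (mem_inter hx hxZ) (by rw [ht]; exact notMem_empty x)

/-- A coercive, proper, lsc convex function is bounded below by `a‖x‖ - b` for some `a > 0`. -/
lemma convc_linear_lb {n : ℕ} {w : En n → EReal} (hw : ConvC n w) :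
    ∃ a b : ℝ, 0 < a ∧ ∀ x : En n, ((a * ‖x‖ - b : ℝ) : EReal) ≤ w x := by
  obtain ⟨hbot, ⟨x₁, hx₁⟩, hlsc, hcvx, hcoer⟩ := hw
  set t₁ : ℝ := (w x₁).toReal with ht₁
  have hwx₁ : w x₁ = ((t₁ : ℝ) : EReal) := (EReal.coe_toReal hx₁ (hbot x₁)).symm
  have hev : ∀ᶠ x in cocompact (En n), (((t₁ + 1 : ℝ)) : EReal) < w x :=
    EReal.tendsto_nhds_top_iff_real.mp hcoer (t₁ + 1)
  obtain ⟨K, hKc, hKsub⟩ := mem_cocompact.mp hev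
  obtain ⟨ρ, hρpos, hρ⟩ : ∃ ρ : ℝ, 0 < ρ ∧ K ⊆ closedBall 0 ρ := by
    obtain ⟨r, hr⟩ := hKc.isBounded.subset_closedBall 0
    exact ⟨max r 1, lt_of_lt_of_le one_pos (le_max_right _ _),
      hr.trans (closedBall_subset_closedBall (le_max_left _ _))⟩
  set R : ℝ := ρ + ‖x₁‖ + 1 with hR
  have hRpos : 0 < R := by positivity
  obtain ⟨m, hm⟩ := lsc_bddBelow_on_compact hlsc hbot (isCompact_closedBall x₁ R)
  set a : ℝ := 1 / R with ha
  have hapos : 0 < a := by positivity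
  set b : ℝ := max (a * (‖x₁‖ + R) - m) (a * ‖x₁‖ - t₁) with hb
  refine ⟨a, b, hapos, fun x => ?_⟩
  by_cases hxC : x ∈ closedBall x₁ R
  · refine le_trans ?_ (hm x hxC)
    rw [EReal.coe_le_coe_iff]
    have h1 : ‖x‖ ≤ ‖x₁‖ + R := by
      have := mem_closedBall_iff_norm.mp hxC
      have h2 : ‖x‖ ≤ ‖x - x₁‖ + ‖x₁‖ := by simpa using norm_add_le (x - x₁) x₁
      linarith
    have h3 : a * (‖x₁‖ + R) - m ≤ b := le_max_left _ _
    nlinarith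
  · by_cases hxt : w x = ⊤
    · rw [hxt]; exact le_top
    have hwx : w x = (((w x).toReal : ℝ) : EReal) := (EReal.coe_toReal hxt (hbot x)).symm
    set s : ℝ := (w x).toReal with hs
    have hdist : R < ‖x - x₁‖ := by
      rw [mem_closedBall_iff_norm, not_le] at hxC
      exact hxC
    have hdpos : 0 < ‖x - x₁‖ := lt_trans hRpos hdist
    set lam : ℝ := R / ‖x - x₁‖ with hlam
    have hlampos : 0 < lam := div_pos hRpos hdpos
    have hlamle : lam < 1 := (div_lt_one hdpos).mpr hdist
    set z : En n := x₁ + lam • (x - x₁) with hz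
    have hz1 : ‖z - x₁‖ = R := by
      rw [hz]
      simp only [add_sub_cancel_left, norm_smul, Real.norm_eq_abs, abs_of_pos hlampos]
      rw [div_mul_cancel₀ _ (ne_of_gt hdpos)]
    have hzK : z ∉ K := by
      intro hzK
      have h4 : ‖z‖ ≤ ρ := by simpa [mem_closedBall_iff_norm] using hρ hzK
      have h5 : ‖z - x₁‖ ≤ ‖z‖ + ‖x₁‖ := norm_sub_le z x₁
      rw [hz1] at h5
      rw [hR] at h5
      linarith
    have hzgt : (((t₁ + 1 : ℝ)) : EReal) < w z := hKsub hzK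
    have hp : (x₁, t₁) ∈ epiSet w := by simp [epiSet, hwx₁]
    have hq : (x, s) ∈ epiSet w := by simp [epiSet, ← hwx]
    have hcomb := hcvx hp hq (by linarith : (0:ℝ) ≤ 1 - lam) hlampos.le (by ring)
    have hzeq : (1 - lam) • x₁ + lam • x = z := by
      rw [hz, smul_sub, sub_smul, one_smul]
      abel
    have hmem : w z ≤ (((1 - lam) * t₁ + lam * s : ℝ) : EReal) := by
      have := hcomb
      simp only [epiSet, Prod.smul_mk, Prod.mk_add_mk, mem_setOf_eq, smul_eq_mul] at this
      rwa [hzeq] at this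
    have hreal : t₁ + 1 < (1 - lam) * t₁ + lam * s := by
      have := lt_of_lt_of_le hzgt hmem
      exact_mod_cast this
    have hsge : a * ‖x‖ - b ≤ s := by
      have h6 : 1 < lam * (s - t₁) := by nlinarith
      have h7 : 1 / lam = a * ‖x - x₁‖ := by
        rw [hlam, ha]; field_simp
      have h8 : 1 / lam < s - t₁ := by
        rw [div_lt_iff₀ hlampos, mul_comm]; linarith
      have h9 : ‖x‖ - ‖x₁‖ ≤ ‖x - x₁‖ := norm_sub_norm_le x x₁
      have h10 : a * ‖x₁‖ - t₁ ≤ b := le_max_right _ _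
      nlinarith
    rw [hwx]
    exact_mod_cast EReal.coe_le_coe_iff.mpr hsge

/-- Finiteness of the integral of a radial function on `Eⁿ` given the 1-d moment bound. -/
lemma radial_lintegral (n : ℕ) (hn : 1 ≤ n) (F : ℝ → ℝ≥0∞) (hF : Measurable F)
    (h : ∫⁻ y in Set.Ioi (0:ℝ), ENNReal.ofReal (y ^ (n-1)) * F y < ⊤) :
    ∫⁻ x : En n, F ‖x‖ < ⊤ := by
  have hne : Nonempty (Fin n) := Fin.pos_iff_nonempty.mp hn
  have hnt : Nontrivial (En n) := inferInstance
  have hdim : Module.finrank ℝ (En n) = n := finrank_euclideanSpace_fin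
  set m : ℕ := Module.finrank ℝ (En n) - 1 with hm
  have hmn : m = n - 1 := by rw [hm, hdim]
  have e1 : ∫⁻ x : En n, F ‖x‖ = ∫⁻ x in ({0}ᶜ : Set (En n)), F ‖x‖ := by
    rw [restrict_compl_singleton]
  have e2 : ∫⁻ x in ({0}ᶜ : Set (En n)), F ‖x‖
      = ∫⁻ x : ({0}ᶜ : Set (En n)), F ‖x.1‖ ∂((volume : Measure (En n)).comap (↑)) :=
    (lintegral_subtype_comap (measurableSet_singleton 0).compl (fun x => F ‖x‖)).symm
  have hmeasP : Measurable (fun p : sphere (0 : En n) 1 × Set.Ioi (0:ℝ) => F p.2) :=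
    hF.comp (measurable_subtype_coe.comp measurable_snd)
  have e3 := ((volume : Measure (En n)).measurePreserving_homeomorphUnitSphereProd).lintegral_comp hmeasP
  simp only [homeomorphUnitSphereProd_apply_snd_coe] at e3
  have e4 : ∫⁻ p : sphere (0 : En n) 1 × Set.Ioi (0:ℝ), F p.2
        ∂((volume : Measure (En n)).toSphere.prod (Measure.volumeIoiPow m))
      = (volume : Measure (En n)).toSphere Set.univ
          * ∫⁻ y : Set.Ioi (0:ℝ), F y ∂(Measure.volumeIoiPow m) := by
    rw [lintegral_prod _ hmeasP.aemeasurable]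
    simp [lintegral_const, mul_comm]
  have e5 : ∫⁻ y : Set.Ioi (0:ℝ), F y ∂(Measure.volumeIoiPow m)
      = ∫⁻ y in Set.Ioi (0:ℝ), ENNReal.ofReal (y ^ m) * F y := by
    have h1 := lintegral_withDensity_eq_lintegral_mul
      (Measure.comap (Subtype.val) (volume : Measure ℝ))
      (f := fun r : Set.Ioi (0:ℝ) => ENNReal.ofReal (r.1 ^ m))
      (by exact (measurable_subtype_coe.pow_const _).ennreal_ofReal)
      (g := fun y : Set.Ioi (0:ℝ) => F y.1) (hF.comp measurable_subtype_coe)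
    exact h1.trans
      (lintegral_subtype_comap measurableSet_Ioi (fun a => ENNReal.ofReal (a ^ m) * F a))
  rw [e1, e2, e3, e4, e5, hmn]
  exact ENNReal.mul_lt_top (measure_lt_top _ _) h

lemma zeval_nonneg {ζ : ℝ → ℝ} (hζpos : ∀ t, 0 < ζ t) (q : EReal) : 0 ≤ zeval ζ q := by
  rw [zeval]; split
  · exact le_refl 0
  · exact (hζpos _).le

lemma zeval_measurable {n : ℕ} {ζ : ℝ → ℝ} (hζcont : Continuous ζ) {w : En n → EReal}
    (hw : Measurable w) : Measurable (fun x => zeval ζ (w x)) := by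
  unfold zeval
  exact Measurable.ite (hw (measurableSet_singleton ⊤)) measurable_const
    (hζcont.measurable.comp hw.ereal_toReal)

lemma zeval_le {ζ : ℝ → ℝ} (hζpos : ∀ t, 0 < ζ t) (hζanti : StrictAnti ζ) {q : EReal} {c : ℝ}
    (hb : q ≠ ⊥) (h : ((c : ℝ) : EReal) ≤ q) : zeval ζ q ≤ ζ c := by
  rw [zeval]
  split
  · exact (hζpos c).le
  · rename_i hq
    refine hζanti.antitone ?_
    have hq' : q = ((q.toReal : ℝ) : EReal) := (EReal.coe_toReal hq hb).symm
    rw [hq', EReal.coe_le_coe_iff] at h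
    exact h

lemma le_of_zeval_gt {ζ : ℝ → ℝ} (hζpos : ∀ t, 0 < ζ t) (hζanti : StrictAnti ζ) {q : EReal}
    {M : ℝ} (hb : q ≠ ⊥) (h : ζ M < zeval ζ q) : q ≤ ((M : ℝ) : EReal) := by
  rw [zeval] at h
  rcases em (q = ⊤) with hq | hq
  · rw [if_pos hq] at h
    exact absurd h (not_lt.mpr (hζpos M).le)
  · rw [if_neg hq] at h
    have h2 : q.toReal < M := hζanti.lt_iff_gt.mp h
    have hq' : q = ((q.toReal : ℝ) : EReal) := (EReal.coe_toReal hq hb).symm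
    rw [hq']
    exact_mod_cast (EReal.coe_le_coe_iff.mpr h2.le)

end Aux

section Integ
open Metric

set_option maxHeartbeats 800000 in
lemma integrable_zeval_pow {n : ℕ} (hn : 1 ≤ n) {p : ℝ} (hp : 1 ≤ p) {ζ : ℝ → ℝ}
    (hζpos : ∀ t, 0 < ζ t) (hζcont : Continuous ζ) (hζanti : StrictAnti ζ)
    (hmom : IntegrableOn (fun t => ζ t ^ p * t ^ (n - 1)) (Set.Ioi (0:ℝ)))
    {w : En n → EReal} (hw : ConvC n w) :
    Integrable (fun x : En n => zeval ζ (w x) ^ p) := by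
  obtain ⟨a, b, hapos, hab⟩ := convc_linear_lb hw
  have hwmeas : Measurable w := hw.2.2.1.measurable
  have hzmeas : Measurable (fun x : En n => zeval ζ (w x)) := zeval_measurable hζcont hwmeas
  have hfmeas : Measurable (fun x : En n => zeval ζ (w x) ^ p) :=
    (Real.continuous_rpow_const (by linarith : (0:ℝ) ≤ p)).measurable.comp hzmeas
  -- pointwise bound by a radial function
  have hbound : ∀ x : En n, zeval ζ (w x) ^ p ≤ ζ (a * ‖x‖ - b) ^ p := by
    intro x
    refine Real.rpow_le_rpow (zeval_nonneg hζpos _) ?_ (by linarith)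
    exact zeval_le hζpos hζanti (hw.1 x) (hab x)
  -- the radial comparison profile
  set c : ℝ := a / 2 with hc
  have hcpos : 0 < c := by positivity
  set b' : ℝ := max b 0 with hb'
  set T : ℝ := (2 * b' + 2) / a with hT
  have hTpos : 0 < T := by
    have : 0 ≤ b' := le_max_right _ _
    positivity
  -- moment integrability of the comparison profile
  have hGI : IntegrableOn (fun y => ζ (a * y - b) ^ p * y ^ (n-1)) (Set.Ioi (0:ℝ)) := by
    have hcont : Continuous (fun y : ℝ => ζ (a * y - b) ^ p * y ^ (n-1)) := by
      apply Continuous.mul _ (continuous_pow _)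
      exact (hζcont.comp (by continuity)).rpow_const (fun x => Or.inr (by linarith))
    have h1 : IntegrableOn (fun y => ζ (a * y - b) ^ p * y ^ (n-1)) (Set.Ioc (0:ℝ) T) := by
      refine Integrable.mono (g := fun _ => ζ (-b') ^ p * (max T 1) ^ (n-1))
        (integrableOn_const (by rw [Real.volume_Ioc]; exact ENNReal.ofReal_ne_top))
        hcont.aestronglyMeasurable ?_
      filter_upwards [ae_restrict_mem measurableSet_Ioc] with y hy
      have hy1 : 0 < y := hy.1
      have hy2 : y ≤ T := hy.2
      have e1 : ζ (a * y - b) ≤ ζ (-b') := by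
        refine hζanti.antitone ?_
        have : b ≤ b' := le_max_left _ _
        nlinarith
      have e2 : y ^ (n-1) ≤ (max T 1) ^ (n-1) := by
        refine pow_le_pow_left₀ hy1.le ?_ _
        exact le_trans hy2 (le_max_left _ _)
      have e3 : (0:ℝ) ≤ ζ (a * y - b) ^ p := Real.rpow_nonneg (hζpos _).le _
      have e4 : ζ (a * y - b) ^ p ≤ ζ (-b') ^ p :=
        Real.rpow_le_rpow (hζpos _).le e1 (by linarith)
      have e5 : (0:ℝ) ≤ y ^ (n-1) := by positivity
      have e6 : (0:ℝ) ≤ (max T 1) ^ (n-1) := by positivity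
      have e7 : (0:ℝ) ≤ ζ (-b') ^ p := Real.rpow_nonneg (hζpos _).le _
      rw [Real.norm_eq_abs, Real.norm_eq_abs, abs_of_nonneg (mul_nonneg e3 e5),
        abs_of_nonneg (mul_nonneg e7 e6)]
      nlinarith
    have h2 : IntegrableOn (fun y => ζ (a * y - b) ^ p * y ^ (n-1)) (Set.Ioi T) := by
      set H : ℝ → ℝ := fun t => ζ t ^ p * t ^ (n-1) with hH
      have hHc : IntegrableOn (fun y => H (c * y)) (Set.Ioi T) := by
        refine (integrableOn_Ioi_comp_mul_left_iff H T hcpos).mpr ?_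
        exact hmom.mono_set (Set.Ioi_subset_Ioi (by positivity))
      refine Integrable.mono (hHc.const_mul ((c ^ (n-1))⁻¹)) hcont.aestronglyMeasurable ?_
      filter_upwards [ae_restrict_mem measurableSet_Ioi] with y hy
      have hyT : T < y := hy
      have hy0 : 0 < y := lt_trans hTpos hyT
      have e1 : c * y ≤ a * y - b := by
        have h3 : b ≤ b' := le_max_left _ _
        have h4 : 2 * b' + 2 ≤ a * y := by
          rw [hT] at hyT
          calc 2 * b' + 2 = a * ((2 * b' + 2)/a) := by field_simp
          _ ≤ a * y := by nlinarith
        have : 0 ≤ b' := le_max_right _ _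
        rw [hc]; nlinarith
      have e2 : ζ (a * y - b) ^ p ≤ ζ (c * y) ^ p :=
        Real.rpow_le_rpow (hζpos _).le (hζanti.antitone e1) (by linarith)
      have e3 : (c ^ (n-1))⁻¹ * H (c * y) = ζ (c * y) ^ p * y ^ (n-1) := by
        simp only [hH]
        have h8 : (c * y) ^ (n-1) = c ^ (n-1) * y ^ (n-1) := mul_pow c y (n-1)
        rw [h8]
        have h9 : (c:ℝ) ^ (n-1) ≠ 0 := by positivity
        field_simp
      have e5 : (0:ℝ) ≤ y ^ (n-1) := by positivity
      have e6 : (0:ℝ) ≤ ζ (c * y) ^ p := Real.rpow_nonneg (hζpos _).le _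
      rw [Real.norm_eq_abs, Real.norm_eq_abs,
        abs_of_nonneg (mul_nonneg (Real.rpow_nonneg (hζpos _).le _) e5),
        abs_of_nonneg (by rw [e3]; exact mul_nonneg e6 e5), e3]
      nlinarith
    have h3 : Set.Ioi (0:ℝ) ⊆ Set.Ioc 0 T ∪ Set.Ioi T := by
      intro y hy
      rcases le_or_gt y T with h | h
      · exact Or.inl ⟨hy, h⟩
      · exact Or.inr h
    exact (h1.union h2).mono_set h3
  -- convert to a lintegral bound and conclude
  refine ⟨hfmeas.aestronglyMeasurable, ?_⟩
  rw [hasFiniteIntegral_iff_norm]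
  set F : ℝ → ℝ≥0∞ := fun y => ENNReal.ofReal (ζ (a * y - b) ^ p) with hF
  have hFmeas : Measurable F := by
    apply Measurable.ennreal_ofReal
    exact (Continuous.rpow_const (hζcont.comp (by continuity))
      (fun x => Or.inr (by linarith))).measurable
  have hle : ∫⁻ x : En n, ENNReal.ofReal ‖zeval ζ (w x) ^ p‖ ≤ ∫⁻ x : En n, F ‖x‖ := by
    refine lintegral_mono fun x => ?_
    rw [Real.norm_eq_abs, abs_of_nonneg (Real.rpow_nonneg (zeval_nonneg hζpos _) _)]
    exact ENNReal.ofReal_le_ofReal (hbound x)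
  refine lt_of_le_of_lt hle (radial_lintegral n hn F hFmeas ?_)
  -- the 1-d moment of F is finite thanks to hGI
  have heq : ∀ y ∈ Set.Ioi (0:ℝ),
      ENNReal.ofReal (y ^ (n-1)) * F y = ENNReal.ofReal (ζ (a * y - b) ^ p * y ^ (n-1)) := by
    intro y hy
    rw [hF, ← ENNReal.ofReal_mul (pow_nonneg (le_of_lt (mem_Ioi.mp hy)) _), mul_comm]
  rw [setLIntegral_congr_fun measurableSet_Ioi heq]
  have h7 := hGI.2
  rw [hasFiniteIntegral_iff_norm] at h7
  refine lt_of_le_of_lt ?_ h7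
  refine lintegral_mono fun y => ?_
  exact ENNReal.ofReal_le_ofReal (le_abs_self _)

lemma abs_sub_rpow_le {a b p : ℝ} (ha : 0 ≤ a) (hb : 0 ≤ b) (hp : 0 ≤ p) :
    |a - b| ^ p ≤ a ^ p + b ^ p := by
  have h1 : |a - b| ≤ max a b := by
    rcases le_total a b with h | h
    · rw [abs_of_nonpos (by linarith)]
      simp only [neg_sub]
      exact le_trans (by linarith) (le_max_right a b)
    · rw [abs_of_nonneg (by linarith)]
      exact le_trans (by linarith) (le_max_left a b)
  refine le_trans (Real.rpow_le_rpow (abs_nonneg _) h1 hp) ?_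
  rcases le_total a b with h | h
  · rw [max_eq_right h]
    have : (0:ℝ) ≤ a ^ p := Real.rpow_nonneg ha p
    linarith
  · rw [max_eq_left h]
    have : (0:ℝ) ≤ b ^ p := Real.rpow_nonneg hb p
    linarith

end Integ

set_option maxHeartbeats 1600000 in
theorem statement4 (n : ℕ) (hn : 1 ≤ n) (p : ℝ) (hp : 1 ≤ p)
    (ζ : ℝ → ℝ) (hζpos : ∀ t, 0 < ζ t) (hζcont : Continuous ζ) (hζanti : StrictAnti ζ)
    (hmom : IntegrableOn (fun t => ζ t ^ p * t ^ (n - 1)) (Set.Ioi (0:ℝ)))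
    (u : ℕ → En n → EReal) (v : En n → EReal)
    (hu : ∀ k, ConvCd n (u k)) (hv : ConvCd n v)
    (hconv : Tendsto (fun k => ∫ x : En n, |zeval ζ (u k x) - zeval ζ (v x)| ^ p)
      atTop (𝓝 0)) :
    ∀ x₀ ∈ interior ({x | v x ≠ ⊤}ᶜ), Tendsto (fun k => u k x₀) atTop (𝓝 (⊤ : EReal)) := by
  intro x₀ hx₀
  by_contra hcon
  -- extract a bound along a subsequence
  have main' : ¬ ∀ C : ℝ, ∀ᶠ k in atTop, ((C:ℝ) : EReal) < u k x₀ :=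
    fun h => hcon (EReal.tendsto_nhds_top_iff_real.mpr h)
  push_neg at main'
  obtain ⟨C, hC⟩ := main'
  -- measurability and integrability
  set f : ℕ → En n → ℝ := fun k x => |zeval ζ (u k x) - zeval ζ (v x)| ^ p with hf
  have hvmeas : Measurable v := hv.1.2.2.1.measurable
  have hzvmeas : Measurable (fun x => zeval ζ (v x)) := zeval_measurable hζcont hvmeas
  have humeas : ∀ k, Measurable (u k) := fun k => (hu k).1.2.2.1.measurable
  have hzumeas : ∀ k, Measurable (fun x => zeval ζ (u k x)) :=
    fun k => zeval_measurable hζcont (humeas k)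
  have hfmeas : ∀ k, Measurable (f k) := fun k =>
    ((Real.continuous_rpow_const (by linarith : (0:ℝ) ≤ p)).measurable).comp
      (((hzumeas k).sub hzvmeas).abs)
  have hfnn : ∀ k x, 0 ≤ f k x := fun k x => Real.rpow_nonneg (abs_nonneg _) _
  have hInt : ∀ k, Integrable (f k) := by
    intro k
    have h1 := integrable_zeval_pow hn hp hζpos hζcont hζanti hmom (hu k).1
    have h2 := integrable_zeval_pow hn hp hζpos hζcont hζanti hmom hv.1
    refine Integrable.mono (h1.add h2) (hfmeas k).aestronglyMeasurable ?_
    refine Filter.Eventually.of_forall fun x => ?_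
    have h3 := abs_sub_rpow_le (zeval_nonneg hζpos (u k x)) (zeval_nonneg hζpos (v x))
      (by linarith : (0:ℝ) ≤ p)
    have h4 : (0:ℝ) ≤ zeval ζ (u k x) ^ p := Real.rpow_nonneg (zeval_nonneg hζpos _) _
    have h5 : (0:ℝ) ≤ zeval ζ (v x) ^ p := Real.rpow_nonneg (zeval_nonneg hζpos _) _
    rw [Real.norm_eq_abs, Real.norm_eq_abs, Pi.add_apply, abs_of_nonneg (hfnn k x),
      abs_of_nonneg (add_nonneg h4 h5)]
    exact h3
  -- ball where v = ⊤
  obtain ⟨r, hrpos, hrball⟩ := Metric.isOpen_iff.mp isOpen_interior x₀ hx₀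
  have vtop : ∀ y ∈ Metric.ball x₀ r, v y = ⊤ := by
    intro y hy
    have := interior_subset (hrball hy)
    simpa using this
  -- ball in the domain of v
  obtain ⟨y₀, hy₀⟩ := hv.2
  obtain ⟨s, hspos, hsball⟩ := Metric.isOpen_iff.mp isOpen_interior y₀ hy₀
  have vfin : ∀ x ∈ Metric.ball y₀ s, v x ≠ ⊤ := fun x hx => interior_subset (hsball hx)
  have hzvpos : ∀ x ∈ Metric.ball y₀ s, 0 < zeval ζ (v x) := by
    intro x hx
    rw [zeval, if_neg (vfin x hx)]
    exact hζpos _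
  -- a positive-measure subset where zeval ζ ∘ v is bounded below
  obtain ⟨j, hj⟩ : ∃ j : ℕ, volume {x ∈ Metric.ball y₀ s | 1/((j:ℝ)+1) ≤ zeval ζ (v x)} ≠ 0 := by
    by_contra hall
    push_neg at hall
    have hcov : Metric.ball y₀ s ⊆ ⋃ j : ℕ, {x ∈ Metric.ball y₀ s | 1/((j:ℝ)+1) ≤ zeval ζ (v x)} := by
      intro x hx
      obtain ⟨j, hj⟩ := exists_nat_one_div_lt (hzvpos x hx)
      exact Set.mem_iUnion.mpr ⟨j, hx, hj.le⟩
    have h0 : volume (Metric.ball y₀ s) = 0 :=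
      le_antisymm (le_trans (measure_mono hcov) (le_of_eq (measure_iUnion_null hall)))
        zero_le
    exact absurd h0 (Metric.measure_ball_pos volume y₀ hspos).ne'
  set ε : ℝ := 1/((j:ℝ)+1) with hε
  have hεpos : 0 < ε := by positivity
  set A : Set (En n) := {x ∈ Metric.ball y₀ s | ε ≤ zeval ζ (v x)} with hA
  have hA0 : volume A ≠ 0 := hj
  have hAball : A ⊆ Metric.ball y₀ s := fun x hx => hx.1
  have hAfin : volume A ≠ ⊤ :=
    (lt_of_le_of_lt (measure_mono hAball) measure_ball_lt_top).ne
  -- a point M where ζ drops below ε/2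
  obtain ⟨M, hM⟩ : ∃ M : ℝ, ζ M < ε/2 := by
    by_contra hMc
    push_neg at hMc
    have hconst : IntegrableOn (fun _ : ℝ => (ε/2) ^ p) (Set.Ioi (1:ℝ)) := by
      refine Integrable.mono (hmom.mono_set (Set.Ioi_subset_Ioi zero_le_one))
        aestronglyMeasurable_const ?_
      filter_upwards [ae_restrict_mem measurableSet_Ioi] with t ht
      have h1 : (1:ℝ) ≤ t := le_of_lt ht
      have h2 : (ε/2)^p ≤ ζ t ^ p :=
        Real.rpow_le_rpow (by linarith) (hMc t) (by linarith)
      have h3 : (1:ℝ) ≤ t ^ (n-1) := one_le_pow₀ h1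
      have h4 : (0:ℝ) ≤ ζ t ^ p := Real.rpow_nonneg (hζpos t).le _
      rw [Real.norm_eq_abs, Real.norm_eq_abs,
        abs_of_nonneg (Real.rpow_nonneg (by linarith) _),
        abs_of_nonneg (by nlinarith : (0:ℝ) ≤ ζ t ^ p * t ^ (n-1))]
      nlinarith
    rw [integrableOn_const_iff] at hconst
    rcases hconst with h | h
    · exact absurd (enorm_eq_zero.mp h) (ne_of_gt (Real.rpow_pos_of_pos (by linarith) p))
    · rw [Real.volume_Ioi] at h
      exact absurd h (lt_irrefl ⊤)
  -- geometry: contraction towards x₀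
  set Rb : ℝ := s + ‖y₀ - x₀‖ with hRb
  have hRbpos : 0 < Rb := by positivity
  set lam : ℝ := r / (r + 2*Rb) with hlam
  have hlampos : 0 < lam := by positivity
  have hlamlt : lam < 1 := by
    rw [hlam, div_lt_one (by positivity)]
    linarith
  have hxdist : ∀ x ∈ A, ‖x - x₀‖ < Rb := by
    intro x hx
    have h1 : ‖x - y₀‖ < s := mem_ball_iff_norm.mp (hAball hx)
    calc ‖x - x₀‖ ≤ ‖x - y₀‖ + ‖y₀ - x₀‖ := by
          simpa using norm_add_le (x - y₀) (y₀ - x₀)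
      _ < Rb := by rw [hRb]; linarith
  -- constants
  set C' : ℝ := max C M with hC'
  set c₂ : ℝ≥0∞ := ENNReal.ofReal ((ε/2) ^ p) with hc₂
  set c₃ : ℝ≥0∞ := ENNReal.ofReal ((ζ C') ^ p) with hc₃
  set L : ℝ≥0∞ := ENNReal.ofReal (lam ^ n) with hL
  have hc₂0 : c₂ ≠ 0 := by
    rw [hc₂]
    simp only [ne_eq, ENNReal.ofReal_eq_zero, not_le]
    exact Real.rpow_pos_of_pos (by linarith) _
  have hc₂top : c₂ ≠ ⊤ := ENNReal.ofReal_ne_top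
  have hc₃0 : c₃ ≠ 0 := by
    rw [hc₃]
    simp only [ne_eq, ENNReal.ofReal_eq_zero, not_le]
    exact Real.rpow_pos_of_pos (hζpos _) _
  have hc₃top : c₃ ≠ ⊤ := ENNReal.ofReal_ne_top
  have hL0 : L ≠ 0 := by
    rw [hL]
    simp only [ne_eq, ENNReal.ofReal_eq_zero, not_le]
    positivity
  have hhalf0 : volume A / 2 ≠ 0 := by
    simp only [ne_eq, ENNReal.div_eq_zero_iff, not_or]
    exact ⟨hA0, by norm_num⟩
  set δ₂ : ℝ≥0∞ := c₂ * (volume A / 2) with hδ₂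
  set δ₃ : ℝ≥0∞ := c₃ * (L * (volume A / 2)) with hδ₃
  have hδ₂pos : 0 < δ₂ := by
    rw [hδ₂, pos_iff_ne_zero]
    exact mul_ne_zero hc₂0 hhalf0
  have hδ₃pos : 0 < δ₃ := by
    rw [hδ₃, pos_iff_ne_zero]
    exact mul_ne_zero hc₃0 (mul_ne_zero hL0 hhalf0)
  -- convergence of the ofReal integrals
  have htend : Tendsto (fun k => ENNReal.ofReal (∫ x : En n, f k x)) atTop (𝓝 0) := by
    have h1 := (ENNReal.continuous_ofReal.tendsto 0).comp hconv
    rwa [ENNReal.ofReal_zero] at h1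
  have hev₂ := htend.eventually_lt_const hδ₂pos
  have hev₃ := htend.eventually_lt_const hδ₃pos
  obtain ⟨k, hkC, hk₂, hk₃⟩ := (hC.and_eventually (hev₂.and hev₃)).exists
  -- lintegral identity
  have hlint : ∫⁻ x : En n, ENNReal.ofReal (f k x) = ENNReal.ofReal (∫ x : En n, f k x) :=
    (MeasureTheory.ofReal_integral_eq_lintegral_ofReal (hInt k)
      (Filter.Eventually.of_forall (hfnn k))).symm
  have hFaemeas : AEMeasurable (fun x : En n => ENNReal.ofReal (f k x)) volume :=
    ((hfmeas k).ennreal_ofReal).aemeasurable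
  -- Chebyshev 1: the set where f k is at least (ε/2)^p within A is small
  have hmark₂ := mul_meas_ge_le_lintegral₀ hFaemeas c₂
  have hbadlt : volume {x : En n | c₂ ≤ ENNReal.ofReal (f k x)} < volume A / 2 := by
    refine (ENNReal.mul_right_strictMono hc₂0 hc₂top).lt_iff_lt.mp ?_
    calc c₂ * volume {x : En n | c₂ ≤ ENNReal.ofReal (f k x)}
        ≤ ∫⁻ x : En n, ENNReal.ofReal (f k x) := hmark₂
      _ = ENNReal.ofReal (∫ x : En n, f k x) := hlint
      _ < δ₂ := hk₂
  -- the good set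
  set G : Set (En n) := {x ∈ A | ε/2 ≤ zeval ζ (u k x)} with hG
  have hsub : A ⊆ G ∪ {x : En n | c₂ ≤ ENNReal.ofReal (f k x)} := by
    intro x hx
    rcases le_or_gt c₂ (ENNReal.ofReal (f k x)) with h | h
    · exact Or.inr h
    · left
      refine ⟨hx, ?_⟩
      have h1 : f k x < (ε/2)^p := by
        rw [hc₂, ENNReal.ofReal_lt_ofReal_iff (Real.rpow_pos_of_pos (by linarith) _)] at h
        exact h
      have h2 : |zeval ζ (u k x) - zeval ζ (v x)| < ε/2 := by
        by_contra h3
        push_neg at h3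
        have h4 : (ε/2)^p ≤ f k x :=
          Real.rpow_le_rpow (by linarith) h3 (by linarith)
        linarith
      have h5 : ε ≤ zeval ζ (v x) := hx.2
      have h6 : zeval ζ (v x) - zeval ζ (u k x) ≤ |zeval ζ (u k x) - zeval ζ (v x)| := by
        rw [abs_sub_comm]
        exact le_abs_self _
      linarith
  have hGhalf : volume A / 2 ≤ volume G := by
    have h8 : volume A ≤ volume G + volume A / 2 := by
      calc volume A ≤ volume (G ∪ {x : En n | c₂ ≤ ENNReal.ofReal (f k x)}) := measure_mono hsub
        _ ≤ volume G + volume {x : En n | c₂ ≤ ENNReal.ofReal (f k x)} := measure_union_le _ _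
        _ ≤ volume G + volume A / 2 := add_le_add_right hbadlt.le _
    have h9 : volume A - volume A / 2 ≤ volume G := tsub_le_iff_right.mpr h8
    rwa [ENNReal.sub_half hAfin] at h9
  -- the image of G under the homothety lies in the large-value set of f k
  have himg : (AffineMap.homothety x₀ lam) '' G ⊆ {x : En n | c₃ ≤ ENNReal.ofReal (f k x)} := by
    rintro - ⟨x, hxG, rfl⟩
    obtain ⟨hxA, hxz⟩ := hxG
    have hbot : u k x ≠ ⊥ := (hu k).1.1 x
    have h11 : u k x ≤ ((M:ℝ) : EReal) :=
      le_of_zeval_gt hζpos hζanti hbot (lt_of_lt_of_le hM hxz)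
    have h12 : u k x ≤ ((C' : ℝ) : EReal) :=
      le_trans h11 (EReal.coe_le_coe_iff.mpr (le_max_right _ _))
    have h13 : u k x₀ ≤ ((C' : ℝ) : EReal) :=
      le_trans hkC (EReal.coe_le_coe_iff.mpr (le_max_left _ _))
    have hTx : AffineMap.homothety x₀ lam x = (1 - lam) • x₀ + lam • x := by
      rw [AffineMap.homothety_apply, vsub_eq_sub, vadd_eq_add, smul_sub, sub_smul, one_smul]
      abel
    -- convexity
    have hcomb := (hu k).1.2.2.2.1 (show (x₀, C') ∈ epiSet (u k) from h13)
      (show (x, C') ∈ epiSet (u k) from h12)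
      (by linarith : (0:ℝ) ≤ 1 - lam) hlampos.le (by ring)
    have hue : u k (AffineMap.homothety x₀ lam x) ≤ ((C' : ℝ) : EReal) := by
      simp only [epiSet, Prod.smul_mk, Prod.mk_add_mk, mem_setOf_eq, smul_eq_mul] at hcomb
      rw [hTx]
      have h14 : (1 - lam) * C' + lam * C' = C' := by ring
      rwa [h14] at hcomb
    have hunetop : u k (AffineMap.homothety x₀ lam x) ≠ ⊤ :=
      ne_top_of_le_ne_top (EReal.coe_ne_top C') hue
    -- the image point is in the ball around x₀
    have hball : AffineMap.homothety x₀ lam x ∈ Metric.ball x₀ r := by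
      rw [mem_ball_iff_norm, hTx]
      have h15 : (1 - lam) • x₀ + lam • x - x₀ = lam • (x - x₀) := by
        rw [smul_sub, sub_smul, one_smul]; abel
      rw [h15, norm_smul, Real.norm_eq_abs, abs_of_pos hlampos]
      have h16 : ‖x - x₀‖ < Rb := hxdist x hxA
      calc lam * ‖x - x₀‖ ≤ lam * Rb := by nlinarith
        _ < r := by
          rw [hlam, div_mul_eq_mul_div, div_lt_iff₀ (by positivity)]
          nlinarith
    have hvT : v (AffineMap.homothety x₀ lam x) = ⊤ := vtop _ hball
    have hz1 : zeval ζ (v (AffineMap.homothety x₀ lam x)) = 0 := by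
      rw [zeval, if_pos hvT]
    have hz2 : ζ C' ≤ zeval ζ (u k (AffineMap.homothety x₀ lam x)) := by
      rw [zeval, if_neg hunetop]
      refine hζanti.antitone ?_
      have := EReal.toReal_le_toReal hue ((hu k).1.1 _) (EReal.coe_ne_top C')
      rwa [EReal.toReal_coe] at this
    show c₃ ≤ ENNReal.ofReal (f k (AffineMap.homothety x₀ lam x))
    rw [hc₃]
    refine ENNReal.ofReal_le_ofReal ?_
    have h17 : f k (AffineMap.homothety x₀ lam x)
        = |zeval ζ (u k (AffineMap.homothety x₀ lam x))
            - zeval ζ (v (AffineMap.homothety x₀ lam x))| ^ p := rfl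
    rw [h17, hz1, sub_zero, abs_of_nonneg (zeval_nonneg hζpos _)]
    exact Real.rpow_le_rpow (hζpos _).le hz2 (by linarith)
  -- measure of the image
  have himgmeas : volume ((AffineMap.homothety x₀ lam) '' G) = L * volume G := by
    rw [Measure.addHaar_image_homothety, hL, finrank_euclideanSpace_fin,
      abs_of_pos (by positivity : (0:ℝ) < lam ^ n)]
  -- Chebyshev 2 and the contradiction
  have hmark₃ := mul_meas_ge_le_lintegral₀ hFaemeas c₃
  have hfinal : δ₃ < δ₃ := by
    calc δ₃ = c₃ * (L * (volume A / 2)) := hδ₃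
      _ ≤ c₃ * (L * volume G) := by
          exact mul_le_mul_right (mul_le_mul_right hGhalf _) _
      _ = c₃ * volume ((AffineMap.homothety x₀ lam) '' G) := by rw [himgmeas]
      _ ≤ c₃ * volume {x : En n | c₃ ≤ ENNReal.ofReal (f k x)} :=
          mul_le_mul_right (measure_mono himg) _
      _ ≤ ∫⁻ x : En n, ENNReal.ofReal (f k x) := hmark₃
      _ = ENNReal.ofReal (∫ x : En n, f k x) := hlint
      _ < δ₃ := hk₃
  exact absurd hfinal (lt_irrefl _)
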